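/- Any weak attractor A : Q → 𝒫(ℕ) of the two-sided birth-death chain RDS has exactly two points on ℙ-almost every fiber, i.e. ℙ({q : #A_q = 2}) = 1; moreover ℙ-a.s. A_q contains exactly one even and exactly one odd natural number. -/

import Mathlib

set_option maxHeartbeats 1000000


open MeasureTheory ProbabilityTheory Filter

/-- The birth-death transition map. -/
noncomputable def bdStep (γ₁ γ₂ : ℝ) (q : ℝ) (x : ℕ) : ℕ :=
  if q < γ₁ / (γ₁ + γ₂ * x) then x + 1 else x - 1

/-- The cocycle of the embedded birth-death chain over the two-sided noise space,
using the coordinates `q₀, …, q_{n−1}`. -/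
noncomputable def bdCocycleZ (γ₁ γ₂ : ℝ) (q : ℤ → ℝ) : ℕ → ℕ → ℕ
  | 0, x => x
  | n + 1, x => bdStep γ₁ γ₂ (q (n : ℤ)) (bdCocycleZ γ₁ γ₂ q n x)

/-- The shift `(θq)ₙ = q_{n+1}`. -/
def shiftZ (q : ℤ → ℝ) : ℤ → ℝ := fun i => q (i + 1)

/-- Distance from a point to a set of naturals. -/
noncomputable def distToSetNat (x : ℕ) (B : Set ℕ) : ℝ :=
  sInf ((fun y : ℕ => |(x : ℝ) - (y : ℝ)|) '' B)

/-- Hausdorff semi-distance on subsets of `ℕ`. -/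
noncomputable def hausSemidistNat (B A : Set ℕ) : ℝ :=
  sSup ((fun x => distToSetNat x A) '' B)

namespace St13

variable {γ₁ γ₂ : ℝ}

lemma cocycle_succ (q : ℤ → ℝ) (n x : ℕ) :
    bdCocycleZ γ₁ γ₂ q (n+1) x = bdStep γ₁ γ₂ (q (n : ℤ)) (bdCocycleZ γ₁ γ₂ q n x) := rfl

lemma cocycle_zero (q : ℤ → ℝ) (x : ℕ) : bdCocycleZ γ₁ γ₂ q 0 x = x := rfl

lemma bdStep_le (r : ℝ) (z : ℕ) : bdStep γ₁ γ₂ r z ≤ z + 1 := by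
  unfold bdStep; split <;> omega

lemma bdStep_ge (r : ℝ) (z : ℕ) : z - 1 ≤ bdStep γ₁ γ₂ r z := by
  unfold bdStep; split <;> omega

lemma cocycle_le (q : ℤ → ℝ) (n x : ℕ) : bdCocycleZ γ₁ γ₂ q n x ≤ x + n := by
  induction n with
  | zero => simp [cocycle_zero]
  | succ n ih =>
    rw [cocycle_succ]
    have := bdStep_le (γ₁ := γ₁) (γ₂ := γ₂) (q (n:ℤ)) (bdCocycleZ γ₁ γ₂ q n x)
    omega

lemma bdStep_parity (hγ₁ : 0 < γ₁) {r : ℝ} (hr : r < 1) (z : ℕ) :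
    bdStep γ₁ γ₂ r z % 2 = (z + 1) % 2 := by
  match z with
  | 0 =>
    have : γ₁ / (γ₁ + γ₂ * (0:ℕ)) = 1 := by
      push_cast; rw [mul_zero, add_zero, div_self hγ₁.ne']
    unfold bdStep
    rw [this, if_pos hr]
  | w + 1 => unfold bdStep; split <;> omega

lemma cocycle_parity (hγ₁ : 0 < γ₁) {q : ℤ → ℝ} {n : ℕ}
    (hq : ∀ i : ℕ, i < n → q (i : ℤ) < 1) (x : ℕ) :
    bdCocycleZ γ₁ γ₂ q n x % 2 = (x + n) % 2 := by
  induction n with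
  | zero => simp [cocycle_zero]
  | succ n ih =>
    rw [cocycle_succ, bdStep_parity hγ₁ (hq n (by omega))]
    have := ih (fun i hi => hq i (by omega))
    omega

lemma bdStep_mono (hγ₁ : 0 < γ₁) {r : ℝ} (hr : r < 1) {x y : ℕ}
    (hpar : x % 2 = y % 2) (hxy : x ≤ y) :
    bdStep γ₁ γ₂ r x ≤ bdStep γ₁ γ₂ r y := by
  rcases eq_or_lt_of_le hxy with h | h
  · subst h; exact le_refl _
  · have h2 : x + 2 ≤ y := by omega
    have h1 := bdStep_le (γ₁ := γ₁) (γ₂ := γ₂) r x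
    have h3 := bdStep_ge (γ₁ := γ₁) (γ₂ := γ₂) r y
    omega

lemma cocycle_mono (hγ₁ : 0 < γ₁) {q : ℤ → ℝ} {n : ℕ}
    (hq : ∀ i : ℕ, i < n → q (i : ℤ) < 1) {x y : ℕ}
    (hpar : x % 2 = y % 2) (hxy : x ≤ y) :
    bdCocycleZ γ₁ γ₂ q n x ≤ bdCocycleZ γ₁ γ₂ q n y := by
  induction n with
  | zero => simpa [cocycle_zero]
  | succ n ih =>
    rw [cocycle_succ, cocycle_succ]
    have hq' : ∀ i : ℕ, i < n → q (i : ℤ) < 1 := fun i hi => hq i (by omega)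
    have hp1 := cocycle_parity (γ₂ := γ₂) hγ₁ hq' x
    have hp2 := cocycle_parity (γ₂ := γ₂) hγ₁ hq' y
    exact bdStep_mono hγ₁ (hq n (by omega)) (by omega) (ih hq')

lemma coalesce_persist {q : ℤ → ℝ} {n : ℕ} {x y : ℕ}
    (h : bdCocycleZ γ₁ γ₂ q n x = bdCocycleZ γ₁ γ₂ q n y) {m : ℕ} (hm : n ≤ m) :
    bdCocycleZ γ₁ γ₂ q m x = bdCocycleZ γ₁ γ₂ q m y := by
  induction m with
  | zero =>
    have : n = 0 := by omega
    subst this; exact h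
  | succ m ih =>
    rcases Nat.lt_or_ge n (m+1) with h' | h'
    · have := ih (by omega)
      rw [cocycle_succ, cocycle_succ, this]
    · have : n = m + 1 := by omega
      subst this; exact h


/-- The walk increments dominating the chain at high levels. -/
noncomputable def xi (q : ℤ → ℝ) (k : ℕ) : ℤ := if q (k : ℤ) < 1/3 then 1 else -1

lemma xi_ge (q : ℤ → ℝ) (k : ℕ) : -1 ≤ xi q k := by unfold xi; split <;> simp

section thresh
variable (hγ₁ : 0 < γ₁) (hγ₂ : 0 < γ₂)
include hγ₁ hγ₂

lemma thresh_le_third {L z : ℕ} (hL : 2*γ₁ ≤ γ₂ * L) (hz : L ≤ z) :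
    γ₁ / (γ₁ + γ₂ * z) ≤ 1/3 := by
  have hz' : (L:ℝ) ≤ z := by exact_mod_cast hz
  have hden : (0:ℝ) < γ₁ + γ₂ * z := by nlinarith
  rw [div_le_iff₀ hden]
  nlinarith

lemma thresh_le_c {z : ℕ} (hz : 1 ≤ z) :
    γ₁ / (γ₁ + γ₂ * z) ≤ γ₁ / (γ₁ + γ₂) := by
  have hz' : (1:ℝ) ≤ z := by exact_mod_cast hz
  have h1 : (0:ℝ) < γ₁ + γ₂ := by linarith
  apply div_le_div_of_nonneg_left hγ₁.le h1
  nlinarith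

lemma bdStep_down {z : ℕ} (hz : 1 ≤ z) {r : ℝ} (hr : γ₁ / (γ₁ + γ₂) ≤ r) :
    bdStep γ₁ γ₂ r z = z - 1 := by
  unfold bdStep
  rw [if_neg]
  push_neg
  exact le_trans (thresh_le_c hγ₁ hγ₂ hz) hr

/-- Under an all-high block of noise of length `L`, a state `≤ L` is driven to `≤ 1`. -/
lemma down_block {q : ℤ → ℝ} {m L y : ℕ}
    (h0 : bdCocycleZ γ₁ γ₂ q m y ≤ L)
    (hq : ∀ k : ℕ, k < L → γ₁ / (γ₁ + γ₂) ≤ q ((m + k : ℕ) : ℤ)) :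
    bdCocycleZ γ₁ γ₂ q (m + L) y ≤ 1 := by
  have key : ∀ j : ℕ, j ≤ L → bdCocycleZ γ₁ γ₂ q (m + j) y ≤ max (L - j) 1 := by
    intro j hj
    induction j with
    | zero => simpa using le_trans h0 (le_max_left _ _)
    | succ j ih =>
      have hj' : j ≤ L := by omega
      have hz := ih hj'
      have : m + (j+1) = (m + j) + 1 := by omega
      rw [this, cocycle_succ]
      set z := bdCocycleZ γ₁ γ₂ q (m+j) y with hzdef
      rcases Nat.lt_or_ge z 1 with h1 | h1
      · have : z = 0 := by omega
        rw [this]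
        have := bdStep_le (γ₁ := γ₁) (γ₂ := γ₂) (q ((m+j : ℕ) : ℤ)) 0
        omega
      · rw [bdStep_down hγ₁ hγ₂ h1 (by exact_mod_cast hq j (by omega))]
        omega
  have := key L (le_refl L)
  simpa using this

/-- Pathwise domination by the `ξ`-walk while the chain stays above `L`. -/
lemma dom_walk {q : ℤ → ℝ} {L y : ℕ} (hL : 2*γ₁ ≤ γ₂ * L) (a : ℕ) :
    ∀ j : ℕ, (∀ k : ℕ, a ≤ k → k < a + j → L + 1 ≤ bdCocycleZ γ₁ γ₂ q k y) →
    (bdCocycleZ γ₁ γ₂ q (a + j) y : ℤ) ≤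
      (bdCocycleZ γ₁ γ₂ q a y : ℤ) + ∑ k ∈ Finset.range j, xi q (a + k) := by
  intro j
  induction j with
  | zero => simp
  | succ j ih =>
    intro hhigh
    have hstep : ∀ k : ℕ, a ≤ k → k < a + j → L + 1 ≤ bdCocycleZ γ₁ γ₂ q k y :=
      fun k h1 h2 => hhigh k h1 (by omega)
    have hz : L + 1 ≤ bdCocycleZ γ₁ γ₂ q (a+j) y := hhigh (a+j) (by omega) (by omega)
    have : a + (j+1) = (a + j) + 1 := by omega
    rw [this, cocycle_succ, Finset.sum_range_succ]
    set z := bdCocycleZ γ₁ γ₂ q (a+j) y with hzdef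
    have hkey : (bdStep γ₁ γ₂ (q ((a+j : ℕ) : ℤ)) z : ℤ) ≤ (z : ℤ) + xi q (a + j) := by
      unfold bdStep
      split
      · rename_i hlt
        have hth : γ₁ / (γ₁ + γ₂ * z) ≤ 1/3 := thresh_le_third hγ₁ hγ₂ hL (by omega)
        have : q ((a+j:ℕ) : ℤ) < 1/3 := lt_of_lt_of_le hlt hth
        unfold xi
        rw [if_pos this]
        push_cast
        ring_nf
        omega
      · have := xi_ge q (a+j)
        have hz1 : 1 ≤ z := by omega
        have : ((z - 1 : ℕ) : ℤ) = (z : ℤ) - 1 := by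
          have : (1:ℕ) ≤ z := hz1
          omega
        omega
    calc (bdStep γ₁ γ₂ (q ((a+j : ℕ) : ℤ)) z : ℤ) ≤ (z : ℤ) + xi q (a + j) := hkey
      _ ≤ ((bdCocycleZ γ₁ γ₂ q a y : ℤ) + ∑ k ∈ Finset.range j, xi q (a + k)) + xi q (a+j) := by
          have := ih hstep
          omega
      _ = (bdCocycleZ γ₁ γ₂ q a y : ℤ) + (∑ k ∈ Finset.range j, xi q (a + k) + xi q (a+j)) := by
          ring

end thresh

/-! ### Measurability infrastructure -/

/-- σ-algebra generated by the coordinates in `s`. -/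
def cmsp (s : Finset ℤ) : MeasurableSpace (ℤ → ℝ) :=
  MeasurableSpace.comap (fun (q : ℤ → ℝ) (i : s) => q (i : ℤ)) inferInstance

lemma cmsp_le (s : Finset ℤ) : cmsp s ≤ (inferInstance : MeasurableSpace (ℤ → ℝ)) := by
  have : Measurable (fun (q : ℤ → ℝ) (i : s) => q (i : ℤ)) :=
    measurable_pi_lambda _ fun i => measurable_pi_apply _
  exact this.comap_le

lemma mem_cmsp_eval {s : Finset ℤ} {i : ℤ} (hi : i ∈ s) {E : Set ℝ} (hE : MeasurableSet E) :
    MeasurableSet[cmsp s] ((fun q : ℤ → ℝ => q i) ⁻¹' E) :=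
  ⟨(fun g : s → ℝ => g ⟨i, hi⟩) ⁻¹' E, (measurable_pi_apply (⟨i, hi⟩ : s)) hE, rfl⟩

lemma measX_cmsp {m : ℕ} {n : ℕ} (hnm : n ≤ m) (y : ℕ) :
    Measurable[cmsp (Finset.Ico (0:ℤ) (m:ℤ))] (fun q => bdCocycleZ γ₁ γ₂ q n y) := by
  induction n with
  | zero =>
    simp only [cocycle_zero]
    exact @measurable_const _ _ _ (cmsp _) _
  | succ n ih =>
    have ih' := ih (by omega)
    letI mΩ : MeasurableSpace (ℤ → ℝ) := cmsp (Finset.Ico (0:ℤ) (m:ℤ))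
    apply measurable_to_countable'
    intro z
    have hset : (fun q => bdCocycleZ γ₁ γ₂ q (n+1) y) ⁻¹' {z}
        = ⋃ w : ℕ, ((fun q => bdCocycleZ γ₁ γ₂ q n y) ⁻¹' {w}
            ∩ ((fun q : ℤ → ℝ => q (n : ℤ)) ⁻¹' {r : ℝ | bdStep γ₁ γ₂ r w = z})) := by
      ext q
      simp only [Set.mem_preimage, Set.mem_singleton_iff, Set.mem_iUnion, Set.mem_inter_iff,
        Set.mem_setOf_eq, cocycle_succ]
      constructor
      · intro h; exact ⟨_, rfl, h⟩
      · rintro ⟨w, hw, h⟩; rw [hw]; exact h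
    rw [hset]
    refine MeasurableSet.iUnion fun w => MeasurableSet.inter (ih' (measurableSet_singleton w)) ?_
    refine mem_cmsp_eval ?_ ?_
    · simp only [Finset.mem_Ico]
      constructor
      · exact Int.ofNat_nonneg n
      · exact_mod_cast (by omega : n < m)
    · have : Measurable (fun r : ℝ => bdStep γ₁ γ₂ r w) := by
        unfold bdStep
        exact Measurable.ite (measurableSet_lt measurable_id measurable_const)
          measurable_const measurable_const
      exact this (measurableSet_singleton z)

lemma cmsp_mono {s t : Finset ℤ} (h : s ⊆ t) : cmsp s ≤ cmsp t := by
  intro F hF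
  obtain ⟨F', hF', rfl⟩ := hF
  have hg : Measurable (fun (f : t → ℝ) (i : s) => f ⟨(i:ℤ), h i.2⟩) :=
    measurable_pi_lambda _ fun i => measurable_pi_apply _
  exact ⟨(fun (f : t → ℝ) (i : s) => f ⟨(i:ℤ), h i.2⟩) ⁻¹' F', hg hF', rfl⟩

lemma measX (n y : ℕ) : Measurable (fun q => bdCocycleZ γ₁ γ₂ q n y) :=
  (measX_cmsp (le_refl n) y).mono (cmsp_le _) (le_refl _)

lemma measXi_cmsp {s : Finset ℤ} {k : ℕ} (hk : (k : ℤ) ∈ s) :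
    Measurable[cmsp s] (fun q => xi q k) := by
  unfold xi
  letI mΩ : MeasurableSpace (ℤ → ℝ) := cmsp s
  exact Measurable.ite (mem_cmsp_eval hk measurableSet_Iio)
    measurable_const measurable_const

lemma measXiSum_cmsp {s : Finset ℤ} {a J : ℕ} (h : ∀ k < J, ((a + k : ℕ) : ℤ) ∈ s) :
    Measurable[cmsp s] (fun q => ∑ k ∈ Finset.range J, xi q (a + k)) := by
  letI mΩ : MeasurableSpace (ℤ → ℝ) := cmsp s
  apply Finset.measurable_sum
  intro k hk
  exact measXi_cmsp (h k (Finset.mem_range.mp hk))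


/-! ### Probability infrastructure -/

section prob
variable {P : Measure (ℤ → ℝ)} [IsProbabilityMeasure P]

lemma indep_pair (hIndep : iIndepFun (fun (i : ℤ) (q : ℤ → ℝ) => q i) P)
    {s t : Finset ℤ} (hst : Disjoint s t) {F G : Set (ℤ → ℝ)}
    (hF : MeasurableSet[cmsp s] F) (hG : MeasurableSet[cmsp t] G) :
    P (F ∩ G) = P F * P G := by
  have h := hIndep.indepFun_finset s t hst (fun i => measurable_pi_apply i)
  obtain ⟨F', hF', rfl⟩ := hF
  obtain ⟨G', hG', rfl⟩ := hG
  exact h.measure_inter_preimage_eq_mul F' G' hF' hG'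

variable (hUnif : ∀ i : ℤ, P.map (fun q => q i) = volume.restrict (Set.Icc (0 : ℝ) 1))
include hUnif

lemma prob_eval (i : ℤ) {E : Set ℝ} (hE : MeasurableSet E) :
    P ((fun q : ℤ → ℝ => q i) ⁻¹' E) = volume (E ∩ Set.Icc 0 1) := by
  rw [← Measure.map_apply (measurable_pi_apply i) hE, hUnif i, Measure.restrict_apply hE]

lemma prob_coord_ge_one (i : ℤ) : P {q : ℤ → ℝ | 1 ≤ q i} = 0 := by
  have h1 : {q : ℤ → ℝ | 1 ≤ q i} = (fun q : ℤ → ℝ => q i) ⁻¹' (Set.Ici 1) := rfl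
  rw [h1, prob_eval hUnif i measurableSet_Ici]
  have h2 : Set.Ici (1:ℝ) ∩ Set.Icc 0 1 = {1} := by
    ext r
    simp only [Set.mem_inter_iff, Set.mem_Ici, Set.mem_Icc, Set.mem_singleton_iff]
    constructor
    · rintro ⟨h, _, h'⟩; linarith
    · rintro rfl; norm_num
  rw [h2, Real.volume_singleton]

lemma prob_not_lt_one : P {q : ℤ → ℝ | ¬ ∀ i : ℕ, q (i:ℤ) < 1} = 0 := by
  have hsub : {q : ℤ → ℝ | ¬ ∀ i : ℕ, q (i:ℤ) < 1} ⊆ ⋃ i : ℕ, {q : ℤ → ℝ | 1 ≤ q (i:ℤ)} := by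
    intro q hq
    simp only [Set.mem_setOf_eq, not_forall, not_lt] at hq
    obtain ⟨i, hi⟩ := hq
    exact Set.mem_iUnion.mpr ⟨i, hi⟩
  exact measure_mono_null hsub (measure_iUnion_null fun i => prob_coord_ge_one hUnif _)

lemma prob_all_ge (hIndep : iIndepFun (fun (i : ℤ) (q : ℤ → ℝ) => q i) P)
    {c : ℝ} (hc0 : 0 ≤ c) (m L : ℕ) :
    P {q : ℤ → ℝ | ∀ k : ℕ, k < L → c ≤ q ((m+k : ℕ) : ℤ)} = ENNReal.ofReal (1-c) ^ L := by
  classical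
  set S : Finset ℤ := (Finset.range L).image (fun k => ((m+k : ℕ) : ℤ)) with hS
  have hinj : Function.Injective (fun k : ℕ => ((m+k : ℕ) : ℤ)) := by
    intro a b h; simp only at h; omega
  have hseteq : {q : ℤ → ℝ | ∀ k : ℕ, k < L → c ≤ q ((m+k:ℕ):ℤ)}
      = ⋂ j ∈ S, (fun q : ℤ → ℝ => q j) ⁻¹' (Set.Ici c) := by
    ext q
    simp only [Set.mem_setOf_eq, Set.mem_iInter, Set.mem_preimage, Set.mem_Ici, hS,
      Finset.mem_image, Finset.mem_range]
    constructor
    · rintro h j ⟨k, hk, rfl⟩; exact h k hk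
    · intro h k hk; exact h _ ⟨k, hk, rfl⟩
  rw [hseteq,
    hIndep.measure_inter_preimage_eq_mul (S := S) (sets := fun _ => Set.Ici c)
      (fun i _ => measurableSet_Ici)]
  have hfac : ∀ j ∈ S, P ((fun q : ℤ → ℝ => q j) ⁻¹' (Set.Ici c)) = ENNReal.ofReal (1-c) := by
    intro j _
    rw [prob_eval hUnif j measurableSet_Ici]
    have h2 : Set.Ici c ∩ Set.Icc 0 1 = Set.Icc c 1 := by
      ext r
      simp only [Set.mem_inter_iff, Set.mem_Ici, Set.mem_Icc]
      constructor
      · rintro ⟨h, h', h''⟩; exact ⟨h, h''⟩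
      · rintro ⟨h, h'⟩; exact ⟨h, le_trans hc0 h, h'⟩
    rw [h2, Real.volume_Icc]
  rw [Finset.prod_congr rfl hfac, Finset.prod_const,
    Finset.card_image_of_injective _ hinj, Finset.card_range]

end prob

/-! ### Chebyshev estimate for the dominating walk -/

noncomputable def eta0 : ℝ → ℝ := fun r => (if r < 1/3 then (1:ℝ) else -1) + 1/3

lemma eta0_meas : Measurable eta0 :=
  (Measurable.ite measurableSet_Iio measurable_const measurable_const).add_const _

lemma eta0_abs_le (r : ℝ) : |eta0 r| ≤ 2 := by
  unfold eta0; split <;> rw [abs_le] <;> norm_num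

lemma eta0_sq_le (r : ℝ) : eta0 r * eta0 r ≤ 2 := by
  unfold eta0; split <;> norm_num

instance : IsProbabilityMeasure (volume.restrict (Set.Icc (0:ℝ) 1)) := by
  constructor
  rw [Measure.restrict_apply_univ, Real.volume_Icc]
  norm_num

lemma integral_eta0 : ∫ r, eta0 r ∂(volume.restrict (Set.Icc (0:ℝ) 1)) = 0 := by
  have heq : eta0 = fun r => Set.indicator (Set.Iio (1/3:ℝ)) (fun _ => (2:ℝ)) r + (-(2/3)) := by
    funext r
    unfold eta0
    by_cases h : r < 1/3
    · rw [if_pos h, Set.indicator_of_mem (by exact h)]; norm_num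
    · rw [if_neg h, Set.indicator_of_notMem (by exact h)]; norm_num
  rw [heq, integral_add ((integrable_const (2:ℝ)).indicator measurableSet_Iio)
    (integrable_const _)]
  rw [integral_indicator_const _ measurableSet_Iio, integral_const]
  have hm : (volume.restrict (Set.Icc (0:ℝ) 1)) (Set.Iio (1/3)) = ENNReal.ofReal (1/3) := by
    rw [Measure.restrict_apply measurableSet_Iio]
    have : Set.Iio (1/3:ℝ) ∩ Set.Icc 0 1 = Set.Ico 0 (1/3) := by
      ext r
      simp only [Set.mem_inter_iff, Set.mem_Iio, Set.mem_Icc, Set.mem_Ico]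
      constructor
      · rintro ⟨h, h', h''⟩; exact ⟨h', h⟩
      · rintro ⟨h, h'⟩; exact ⟨h', h, by linarith⟩
    rw [this, Real.volume_Ico]
    norm_num
  rw [measureReal_def, measureReal_def, hm, measure_univ]
  rw [ENNReal.toReal_ofReal (by norm_num)]
  norm_num

section cheb
variable {P : Measure (ℤ → ℝ)} [IsProbabilityMeasure P]
variable (hIndep : iIndepFun (fun (i : ℤ) (q : ℤ → ℝ) => q i) P)
variable (hUnif : ∀ i : ℤ, P.map (fun q => q i) = volume.restrict (Set.Icc (0 : ℝ) 1))
include hIndep hUnif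

lemma cheb (a tt N : ℕ) (hN6 : 6 ≤ N) {ρ : ℝ} (hρpos : 0 < ρ) (hρN : 72 ≤ ρ * N) :
    P {q : ℤ → ℝ | -(tt:ℤ) ≤ ∑ k ∈ Finset.range (N*(tt+2)), xi q (a+k)}
      ≤ ENNReal.ofReal (ρ/2) := by
  classical
  set J : ℕ := N*(tt+2) with hJdef
  set η : ℕ → (ℤ → ℝ) → ℝ := fun k q => eta0 (q ((a+k:ℕ):ℤ)) with hη
  set Z : (ℤ → ℝ) → ℝ := fun q => ∑ k ∈ Finset.range J, η k q with hZ
  have hmeasη : ∀ k, Measurable (η k) := fun k => eta0_meas.comp (measurable_pi_apply _)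
  have hintη : ∀ k, Integrable (η k) P := fun k =>
    Integrable.mono' (integrable_const 2) (hmeasη k).aestronglyMeasurable
      (ae_of_all _ fun q => eta0_abs_le _)
  have hintη2 : ∀ k l, Integrable (fun q => η k q * η l q) P := by
    intro k l
    refine Integrable.mono' (integrable_const (4:ℝ))
      ((hmeasη k).mul (hmeasη l)).aestronglyMeasurable (ae_of_all _ fun q => ?_)
    rw [Real.norm_eq_abs, abs_mul]
    calc |η k q| * |η l q| ≤ 2 * 2 :=
          mul_le_mul (eta0_abs_le _) (eta0_abs_le _) (abs_nonneg _) (by norm_num)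
      _ = 4 := by norm_num
  have hEη : ∀ k, ∫ q, η k q ∂P = 0 := by
    intro k
    have h1 : ∫ q, η k q ∂P = ∫ r, eta0 r ∂(P.map (fun q : ℤ → ℝ => q ((a+k:ℕ):ℤ))) := by
      rw [integral_map (measurable_pi_apply _).aemeasurable eta0_meas.aestronglyMeasurable]
    rw [h1, hUnif, integral_eta0]
  have hcross : ∀ k l, k ≠ l → ∫ q, η k q * η l q ∂P = 0 := by
    intro k l hkl
    have hne : ((a+k:ℕ):ℤ) ≠ ((a+l:ℕ):ℤ) := by
      intro h; apply hkl; omega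
    have hind : IndepFun (η k) (η l) P := (hIndep.indepFun hne).comp eta0_meas eta0_meas
    have h2 := hind.integral_mul_eq_mul_integral (hintη k).aestronglyMeasurable (hintη l).aestronglyMeasurable
    calc ∫ q, η k q * η l q ∂P = ∫ q, (η k * η l) q ∂P := rfl
      _ = (∫ q, η k q ∂P) * ∫ q, η l q ∂P := h2
      _ = 0 := by rw [hEη, hEη, mul_zero]
  have hEZ2 : ∫ q, Z q * Z q ∂P ≤ 2*J := by
    have hexp : ∀ q, Z q * Z q = ∑ k ∈ Finset.range J, ∑ l ∈ Finset.range J, η k q * η l q := by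
      intro q; rw [hZ]; exact Finset.sum_mul_sum _ _ _ _
    calc ∫ q, Z q * Z q ∂P
        = ∑ k ∈ Finset.range J, ∫ q, (∑ l ∈ Finset.range J, η k q * η l q) ∂P := by
          simp_rw [hexp]
          exact integral_finset_sum _ (fun k _ => integrable_finset_sum _ (fun l _ => hintη2 k l))
      _ = ∑ k ∈ Finset.range J, ∑ l ∈ Finset.range J, ∫ q, η k q * η l q ∂P :=
          Finset.sum_congr rfl fun k _ => integral_finset_sum _ (fun l _ => hintη2 k l)
      _ ≤ ∑ _k ∈ Finset.range J, 2 := by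
          apply Finset.sum_le_sum
          intro k hk
          rw [Finset.sum_eq_single_of_mem k hk (fun l _ hlk => hcross k l (Ne.symm hlk))]
          calc ∫ q, η k q * η k q ∂P ≤ ∫ _q, (2:ℝ) ∂P :=
                integral_mono (hintη2 k k) (integrable_const 2) (fun q => eta0_sq_le _)
            _ = 2 := by rw [integral_const, probReal_univ]; norm_num
      _ = 2*J := by rw [Finset.sum_const, Finset.card_range, nsmul_eq_mul]; ring
  set ε : ℝ := (J:ℝ)/3 - tt with hε
  have hεlb : ((N:ℝ)/6) * ((tt:ℝ)+2) ≤ ε := by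
    have hN' : (6:ℝ) ≤ N := by exact_mod_cast hN6
    have hJ' : (J:ℝ) = N * ((tt:ℝ)+2) := by rw [hJdef]; push_cast; ring
    rw [hε, hJ']
    nlinarith [Nat.cast_nonneg (α := ℝ) tt]
  have hεpos : 0 < ε := by
    refine lt_of_lt_of_le ?_ hεlb
    have hN' : (6:ℝ) ≤ N := by exact_mod_cast hN6
    nlinarith [Nat.cast_nonneg (α := ℝ) tt]
  have hsub : {q : ℤ → ℝ | -(tt:ℤ) ≤ ∑ k ∈ Finset.range J, xi q (a+k)}
      ⊆ {q | ε*ε ≤ Z q * Z q} := by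
    intro q hq
    simp only [Set.mem_setOf_eq] at hq ⊢
    have hcast : ∀ k, η k q = ((xi q (a+k) : ℤ) : ℝ) + 1/3 := by
      intro k
      rw [hη]
      show eta0 (q ((a+k:ℕ):ℤ)) = _
      unfold eta0 xi
      by_cases h : q ((a+k:ℕ):ℤ) < 1/3
      · rw [if_pos h, if_pos h]; norm_num
      · rw [if_neg h, if_neg h]; norm_num
    have hZq : Z q = ((∑ k ∈ Finset.range J, xi q (a+k) : ℤ) : ℝ) + (J:ℝ)/3 := by
      rw [hZ]
      simp only [hcast]
      rw [Finset.sum_add_distrib, Finset.sum_const, Finset.card_range, nsmul_eq_mul]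
      push_cast
      ring
    have hZge : ε ≤ Z q := by
      rw [hZq, hε]
      have : (-(tt:ℤ) : ℝ) ≤ ((∑ k ∈ Finset.range J, xi q (a+k) : ℤ) : ℝ) := by
        exact_mod_cast hq
      push_cast at this ⊢
      linarith
    exact mul_le_mul hZge hZge hεpos.le (le_trans hεpos.le hZge)
  have hintZZ : Integrable (fun q => Z q * Z q) P := by
    have : ∀ q, Z q * Z q = ∑ k ∈ Finset.range J, ∑ l ∈ Finset.range J, η k q * η l q := by
      intro q; rw [hZ]; exact Finset.sum_mul_sum _ _ _ _
    simp_rw [this]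
    exact integrable_finset_sum _ (fun k _ => integrable_finset_sum _ (fun l _ => hintη2 k l))
  have hmar := mul_meas_ge_le_integral_of_nonneg
    (ae_of_all P fun q => mul_self_nonneg (Z q)) hintZZ (ε*ε)
  have hfin : P {q | ε*ε ≤ Z q * Z q} ≠ ⊤ := measure_ne_top _ _
  have htoReal : (P {q | ε*ε ≤ Z q * Z q}).toReal ≤ ρ/2 := by
    have hεε : 0 < ε*ε := mul_pos hεpos hεpos
    have h1 : (P {q | ε*ε ≤ Z q * Z q}).toReal ≤ (2*J)/(ε*ε) := by
      rw [le_div_iff₀ hεε]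
      calc (P {q | ε*ε ≤ Z q * Z q}).toReal * (ε*ε)
          = (ε*ε) * (P {q | ε*ε ≤ Z q * Z q}).toReal := by ring
        _ ≤ ∫ q, Z q * Z q ∂P := hmar
        _ ≤ 2*J := hEZ2
    refine le_trans h1 ?_
    -- numeric: 2J/ε² ≤ ρ/2
    have hN' : (6:ℝ) ≤ N := by exact_mod_cast hN6
    have hT : (2:ℝ) ≤ (tt:ℝ)+2 := by
      have := Nat.cast_nonneg (α := ℝ) tt; linarith
    have hJ' : (J:ℝ) = N * ((tt:ℝ)+2) := by rw [hJdef]; push_cast; ring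
    rw [div_le_iff₀ (mul_pos hεpos hεpos)]
    have hq1 : ((N:ℝ)/6 * ((tt:ℝ)+2)) * ((N:ℝ)/6 * ((tt:ℝ)+2)) ≤ ε * ε :=
      mul_le_mul hεlb hεlb (by positivity) hεpos.le
    have hρN' : (72:ℝ) ≤ ρ * N := hρN
    rw [hJ']
    have hNpos : (0:ℝ) < N := by linarith
    set T : ℝ := (tt:ℝ)+2 with hTdef
    have hNT : (0:ℝ) ≤ N*T := by nlinarith
    have k1 : 72*(N*T*T) ≤ (ρ*(N:ℝ))*(N*T*T) := by
      apply mul_le_mul_of_nonneg_right hρN'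
      nlinarith
    have k2 : ((N:ℝ)*T)*2 ≤ ((N:ℝ)*T)*T := mul_le_mul_of_nonneg_left hT hNT
    have k3 : ρ/2 * (((N:ℝ)/6*T)*((N:ℝ)/6*T)) = (ρ*(N:ℝ))*(N*T*T)/72 := by ring
    have k4 : ρ/2*(((N:ℝ)/6*T)*((N:ℝ)/6*T)) ≤ ρ/2*(ε*ε) :=
      mul_le_mul_of_nonneg_left hq1 (by positivity)
    clear_value ε J T
    calc 2*((N:ℝ)*T) ≤ (N:ℝ)*T*T := by linarith
      _ ≤ ρ*(N:ℝ)*((N:ℝ)*T*T)/72 := by linarith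
      _ = ρ/2 * (((N:ℝ)/6*T)*((N:ℝ)/6*T)) := k3.symm
      _ ≤ ρ/2*(ε*ε) := k4
  calc P {q : ℤ → ℝ | -(tt:ℤ) ≤ ∑ k ∈ Finset.range J, xi q (a+k)}
      ≤ P {q | ε*ε ≤ Z q * Z q} := measure_mono hsub
    _ ≤ ENNReal.ofReal (ρ/2) := by
        rw [← ENNReal.ofReal_toReal hfin]
        exact ENNReal.ofReal_le_ofReal htoReal
end cheb

/-! ### The recurrence estimate: the chain a.s. returns below 2 -/

section recur
variable {γ₁ γ₂ : ℝ} {P : Measure (ℤ → ℝ)} [IsProbabilityMeasure P]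

lemma recur_step (hγ₁ : 0 < γ₁) (hγ₂ : 0 < γ₂)
    (hIndep : iIndepFun (fun (i : ℤ) (q : ℤ → ℝ) => q i) P)
    (hUnif : ∀ i : ℤ, P.map (fun q => q i) = volume.restrict (Set.Icc (0 : ℝ) 1))
    (y L N : ℕ) (hL2 : 2*γ₁ ≤ γ₂*(L:ℝ)) (hN6 : 6 ≤ N)
    {ρ : ℝ} (hρ : ρ = (1-γ₁/(γ₁+γ₂))^L) (hρpos : 0 < ρ) (hρ1 : ρ ≤ 1) (hρN : 72 ≤ ρ*(N:ℝ))
    (a b : ℕ) (hb : b = a + N*((y+a)+2) + L) :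
    P {q | ∀ n, n ≤ b → 2 ≤ bdCocycleZ γ₁ γ₂ q n y}
      ≤ ENNReal.ofReal (1-ρ/2) * P {q | ∀ n, n ≤ a → 2 ≤ bdCocycleZ γ₁ γ₂ q n y} := by
  classical
  set c : ℝ := γ₁/(γ₁+γ₂) with hc
  have hc0 : 0 < c := div_pos hγ₁ (by linarith)
  have hc1 : c < 1 := by
    rw [hc, div_lt_one (by linarith)]
    linarith
  set tt : ℕ := y + a with htt
  set J : ℕ := N*(tt+2) with hJ
  set FailA : Set (ℤ → ℝ) := {q | ∀ n, n ≤ a → 2 ≤ bdCocycleZ γ₁ γ₂ q n y} with hFailA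
  set FailB : Set (ℤ → ℝ) := {q | ∀ n, n ≤ b → 2 ≤ bdCocycleZ γ₁ γ₂ q n y} with hFailB
  set U : Set (ℤ → ℝ) := {q | (∑ k ∈ Finset.range J, xi q (a+k)) ≤ -((tt:ℤ)+1)} with hU
  set D : ℕ → Set (ℤ → ℝ) := fun s =>
    {q | bdCocycleZ γ₁ γ₂ q s y ≤ L ∧
      ∀ s', a ≤ s' → s' < s → L+1 ≤ bdCocycleZ γ₁ γ₂ q s' y} with hD
  set H : ℕ → Set (ℤ → ℝ) := fun s => {q | ∀ k : ℕ, k < L → c ≤ q ((s+k : ℕ) : ℤ)} with hH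
  -- measurability
  have hFailA_m : ∀ m : ℕ, a ≤ m → MeasurableSet[cmsp (Finset.Ico (0:ℤ) (m:ℤ))] FailA := by
    intro m hm
    have : FailA = ⋂ (n : ℕ), ⋂ (_ : n ≤ a),
        (fun q => bdCocycleZ γ₁ γ₂ q n y) ⁻¹' (Set.Ici 2) := by
      ext q
      simp only [hFailA, Set.mem_setOf_eq, Set.mem_iInter, Set.mem_preimage, Set.mem_Ici]
    rw [this]
    exact MeasurableSet.iInter fun n => MeasurableSet.iInter fun hn =>
      measX_cmsp (le_trans hn hm) y measurableSet_Ici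
  have hD_m : ∀ s : ℕ, MeasurableSet[cmsp (Finset.Ico (0:ℤ) (s:ℤ))] (FailA ∩ D s) → True := fun _ _ => trivial
  have hDm : ∀ s : ℕ, a ≤ s → MeasurableSet[cmsp (Finset.Ico (0:ℤ) (s:ℤ))] (FailA ∩ D s) := by
    intro s hs
    refine MeasurableSet.inter (hFailA_m s hs) ?_
    have : D s = ((fun q => bdCocycleZ γ₁ γ₂ q s y) ⁻¹' (Set.Iic L)) ∩
        (⋂ (s' : ℕ), ⋂ (_ : a ≤ s'), ⋂ (_ : s' < s),
          (fun q => bdCocycleZ γ₁ γ₂ q s' y) ⁻¹' (Set.Ici (L+1))) := by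
      ext q
      simp only [hD, Set.mem_setOf_eq, Set.mem_inter_iff, Set.mem_preimage, Set.mem_Iic,
        Set.mem_Ici, Set.mem_iInter]
    rw [this]
    refine MeasurableSet.inter (measX_cmsp (le_refl s) y measurableSet_Iic) ?_
    refine MeasurableSet.iInter fun s' => MeasurableSet.iInter fun _ =>
      MeasurableSet.iInter fun hs' => measX_cmsp (by omega) y measurableSet_Ici
  have hHm : ∀ s : ℕ, MeasurableSet[cmsp (Finset.Ico (s:ℤ) ((s+L : ℕ):ℤ))] (H s) := by
    intro s
    have : H s = ⋂ (k : ℕ), ⋂ (_ : k < L), (fun q : ℤ → ℝ => q ((s+k:ℕ):ℤ)) ⁻¹' (Set.Ici c) := by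
      ext q
      simp only [hH, Set.mem_setOf_eq, Set.mem_iInter, Set.mem_preimage, Set.mem_Ici]
    rw [this]
    refine MeasurableSet.iInter fun k => MeasurableSet.iInter fun hk => ?_
    refine mem_cmsp_eval ?_ measurableSet_Ici
    simp only [Finset.mem_Ico]
    omega
  have hUm : MeasurableSet[cmsp (Finset.Ico (a:ℤ) ((a+J:ℕ):ℤ))] U := by
    have hsum := measXiSum_cmsp (s := Finset.Ico (a:ℤ) ((a+J:ℕ):ℤ)) (a := a) (J := J)
      (by intro k hk; simp only [Finset.mem_Ico]; omega)
    exact hsum measurableSet_Iic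
  -- global measurability
  have hFailAg : MeasurableSet FailA := (cmsp_le _) _ (hFailA_m a (le_refl a))
  have hDg : ∀ s : ℕ, a ≤ s → MeasurableSet (FailA ∩ D s) := fun s hs => (cmsp_le _) _ (hDm s hs)
  have hHg : ∀ s : ℕ, MeasurableSet (H s) := fun s => (cmsp_le _) _ (hHm s)
  -- the inclusion
  have hsubset : FailB ⊆ (FailA ∩ Uᶜ) ∪
      ⋃ s ∈ Finset.Icc a (a+J), (FailA ∩ D s ∩ (H s)ᶜ) := by
    intro q hq
    have hq' : ∀ n, n ≤ b → 2 ≤ bdCocycleZ γ₁ γ₂ q n y := hq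
    have hFA : q ∈ FailA := by
      intro n hn; exact hq' n (by omega)
    by_cases hUq : q ∈ U
    · right
      have hdip : ∃ s, (a ≤ s ∧ s ≤ a + J) ∧ bdCocycleZ γ₁ γ₂ q s y ≤ L := by
        by_contra hcon
        push_neg at hcon
        have hhigh : ∀ k, a ≤ k → k < a + J → L + 1 ≤ bdCocycleZ γ₁ γ₂ q k y := by
          intro k h1 h2
          have := hcon k ⟨h1, by omega⟩
          omega
        have hd := dom_walk hγ₁ hγ₂ hL2 a J hhigh
        have hXa : bdCocycleZ γ₁ γ₂ q a y ≤ y + a := by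
          have := cocycle_le (γ₁ := γ₁) (γ₂ := γ₂) q a y
          omega
        have hlow : L + 1 ≤ bdCocycleZ γ₁ γ₂ q (a+J) y := hcon (a+J) ⟨by omega, le_refl _⟩ |> fun h => by omega
        have hUq' : (∑ k ∈ Finset.range J, xi q (a+k)) ≤ -((tt:ℤ)+1) := hUq
        have hcast : (bdCocycleZ γ₁ γ₂ q a y : ℤ) ≤ (y:ℤ) + a := by exact_mod_cast hXa
        have : (bdCocycleZ γ₁ γ₂ q (a+J) y : ℤ) < 0 := by
          calc (bdCocycleZ γ₁ γ₂ q (a+J) y : ℤ)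
              ≤ (bdCocycleZ γ₁ γ₂ q a y : ℤ) + ∑ k ∈ Finset.range J, xi q (a+k) := hd
            _ ≤ ((y:ℤ) + a) + (-((tt:ℤ)+1)) := add_le_add hcast hUq'
            _ < 0 := by simp only [htt]; push_cast; omega
        have := Int.ofNat_nonneg (bdCocycleZ γ₁ γ₂ q (a+J) y)
        omega
      set pred : ℕ → Prop := fun s => a ≤ s ∧ s ≤ a + J ∧ bdCocycleZ γ₁ γ₂ q s y ≤ L with hpred
      have hex : ∃ s, pred s := by
        obtain ⟨s, ⟨h1, h2⟩, h3⟩ := hdip; exact ⟨s, h1, h2, h3⟩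
      have hmin := Nat.find_spec hex
      set s := Nat.find hex with hsdef
      have hqD : q ∈ D s := by
        refine ⟨hmin.2.2, ?_⟩
        intro s' h1 h2
        have := Nat.find_min hex (m := s') h2
        simp only [hpred] at this
        push_neg at this
        have := this h1 (by omega)
        omega
      have hqH : q ∉ H s := by
        intro hHq
        have hdb := down_block hγ₁ hγ₂ (q := q) (m := s) (L := L) (y := y) hmin.2.2 hHq
        have := hq' (s + L) (by omega)
        omega
      refine Set.mem_biUnion (Finset.mem_Icc.mpr ⟨hmin.1, hmin.2.1⟩) ?_
      exact ⟨⟨hFA, hqD⟩, hqH⟩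
    · left; exact ⟨hFA, hUq⟩
  -- probability bounds for the pieces
  have hPU : P Uᶜ ≤ ENNReal.ofReal (ρ/2) := by
    have : Uᶜ = {q : ℤ → ℝ | -(tt:ℤ) ≤ ∑ k ∈ Finset.range (N*(tt+2)), xi q (a+k)} := by
      ext q
      simp only [hU, Set.mem_compl_iff, Set.mem_setOf_eq, not_le, ← hJ]
      omega
    rw [this]
    exact cheb hIndep hUnif a tt N hN6 hρpos hρN
  have hPH : ∀ s : ℕ, P ((H s)ᶜ) ≤ ENNReal.ofReal (1-ρ) := by
    intro s
    have h1 : P (H s) = ENNReal.ofReal ρ := by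
      have := prob_all_ge hUnif hIndep hc0.le s L
      rw [hH]
      rw [this]  -- careful: set eq
      rw [← ENNReal.ofReal_pow (by linarith), hρ, hc]
    rw [measure_compl (hHg s) (measure_ne_top _ _), h1, measure_univ,
      ← ENNReal.ofReal_one, ← ENNReal.ofReal_sub _ hρpos.le]
  have hdisj : (Finset.Icc a (a+J) : Set ℕ).PairwiseDisjoint (fun s => FailA ∩ D s ∩ (H s)ᶜ) := by
    intro s1 h1 s2 h2 hne
    rcases Nat.lt_or_ge s1 s2 with hlt | hge
    · refine Set.disjoint_left.mpr fun q hq1 hq2 => ?_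
      have hd1 : bdCocycleZ γ₁ γ₂ q s1 y ≤ L := hq1.1.2.1
      have hd2 := hq2.1.2.2 s1 (Finset.mem_Icc.mp h1).1 hlt
      omega
    · have hlt : s2 < s1 := by omega
      refine Set.disjoint_left.mpr fun q hq1 hq2 => ?_
      have hd1 : bdCocycleZ γ₁ γ₂ q s2 y ≤ L := hq2.1.2.1
      have hd2 := hq1.1.2.2 s2 (Finset.mem_Icc.mp h2).1 hlt
      omega
  have hdisj2 : (Finset.Icc a (a+J) : Set ℕ).PairwiseDisjoint (fun s => FailA ∩ D s) := by
    intro s1 h1 s2 h2 hne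
    rcases Nat.lt_or_ge s1 s2 with hlt | hge
    · refine Set.disjoint_left.mpr fun q hq1 hq2 => ?_
      have hd1 : bdCocycleZ γ₁ γ₂ q s1 y ≤ L := hq1.2.1
      have hd2 := hq2.2.2 s1 (Finset.mem_Icc.mp h1).1 hlt
      omega
    · have hlt : s2 < s1 := by omega
      refine Set.disjoint_left.mpr fun q hq1 hq2 => ?_
      have hd1 : bdCocycleZ γ₁ γ₂ q s2 y ≤ L := hq2.2.1
      have hd2 := hq1.2.2 s2 (Finset.mem_Icc.mp h2).1 hlt
      omega
  -- assemble
  calc P FailB ≤ P ((FailA ∩ Uᶜ) ∪ ⋃ s ∈ Finset.Icc a (a+J), (FailA ∩ D s ∩ (H s)ᶜ)) :=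
        measure_mono hsubset
    _ ≤ P (FailA ∩ Uᶜ) + P (⋃ s ∈ Finset.Icc a (a+J), (FailA ∩ D s ∩ (H s)ᶜ)) :=
        measure_union_le _ _
    _ ≤ P (FailA ∩ Uᶜ) + ∑ s ∈ Finset.Icc a (a+J), P (FailA ∩ D s ∩ (H s)ᶜ) := by
        gcongr
        exact measure_biUnion_finset_le _ _
    _ ≤ P FailA * ENNReal.ofReal (ρ/2) + ∑ s ∈ Finset.Icc a (a+J), P (FailA ∩ D s) * ENNReal.ofReal (1-ρ) := by
        refine add_le_add ?_ (Finset.sum_le_sum fun s hs => ?_)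
        · rw [indep_pair hIndep (Finset.Ico_disjoint_Ico_consecutive 0 (a:ℤ) ((a+J:ℕ):ℤ))
            (hFailA_m a (le_refl a)) (MeasurableSet.compl hUm)]
          exact mul_le_mul_right hPU _
        · rw [indep_pair hIndep (Finset.Ico_disjoint_Ico_consecutive 0 ((s:ℕ):ℤ) ((s+L:ℕ):ℤ))
            (hDm s (Finset.mem_Icc.mp hs).1) (MeasurableSet.compl (hHm s))]
          exact mul_le_mul_right (hPH s) _
    _ = P FailA * ENNReal.ofReal (ρ/2) +
          (∑ s ∈ Finset.Icc a (a+J), P (FailA ∩ D s)) * ENNReal.ofReal (1-ρ) := by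
        rw [Finset.sum_mul]
    _ ≤ P FailA * ENNReal.ofReal (ρ/2) + P FailA * ENNReal.ofReal (1-ρ) := by
        gcongr
        rw [← measure_biUnion_finset hdisj2 (fun s hs => hDg s (Finset.mem_Icc.mp hs).1)]
        refine measure_mono ?_
        intro q hq
        simp only [Set.mem_iUnion] at hq
        obtain ⟨s, _, hq⟩ := hq
        exact hq.1
    _ = ENNReal.ofReal (1-ρ/2) * P FailA := by
        rw [← mul_add, ← ENNReal.ofReal_add (by linarith) (by linarith)]
        rw [mul_comm]
        congr 1
        congr 1
        ring

lemma recur (hγ₁ : 0 < γ₁) (hγ₂ : 0 < γ₂)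
    (hIndep : iIndepFun (fun (i : ℤ) (q : ℤ → ℝ) => q i) P)
    (hUnif : ∀ i : ℤ, P.map (fun q => q i) = volume.restrict (Set.Icc (0 : ℝ) 1))
    (y : ℕ) :
    P {q | ∀ n : ℕ, 2 ≤ bdCocycleZ γ₁ γ₂ q n y} = 0 := by
  classical
  set c : ℝ := γ₁/(γ₁+γ₂) with hc
  have hc0 : 0 < c := div_pos hγ₁ (by linarith)
  have hc1 : c < 1 := by rw [hc, div_lt_one (by linarith)]; linarith
  set L : ℕ := max 1 (Nat.ceil (2*γ₁/γ₂)) with hL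
  have hL2 : 2*γ₁ ≤ γ₂*(L:ℝ) := by
    have h1 : 2*γ₁/γ₂ ≤ (Nat.ceil (2*γ₁/γ₂) : ℝ) := Nat.le_ceil _
    have h2 : ((Nat.ceil (2*γ₁/γ₂) : ℕ) : ℝ) ≤ (L:ℝ) := by
      exact_mod_cast le_max_right 1 (Nat.ceil (2*γ₁/γ₂))
    rw [div_le_iff₀ hγ₂] at h1
    nlinarith
  set ρ : ℝ := (1-c)^L with hρ
  have hρpos : 0 < ρ := pow_pos (by linarith) L
  have hρ1 : ρ ≤ 1 := pow_le_one₀ (by linarith) (by linarith)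
  set N : ℕ := max 6 (Nat.ceil (72/ρ)) with hN
  have hN6 : 6 ≤ N := le_max_left _ _
  have hρN : 72 ≤ ρ*(N:ℝ) := by
    have h1 : 72/ρ ≤ (Nat.ceil (72/ρ) : ℝ) := Nat.le_ceil _
    have h2 : ((Nat.ceil (72/ρ) : ℕ) : ℝ) ≤ (N:ℝ) := by
      exact_mod_cast le_max_right 6 (Nat.ceil (72/ρ))
    rw [div_le_iff₀ hρpos] at h1
    nlinarith
  set t : ℕ → ℕ := fun K => Nat.rec 0 (fun _ tk => tk + N*((y + tk)+2) + L) K with ht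
  have htS : ∀ K, t (K+1) = t K + N*((y + t K)+2) + L := fun K => rfl
  set F : ℕ → Set (ℤ → ℝ) := fun K => {q | ∀ n, n ≤ t K → 2 ≤ bdCocycleZ γ₁ γ₂ q n y} with hF
  have hkey : ∀ K, P (F (K+1)) ≤ ENNReal.ofReal (1-ρ/2) * P (F K) := fun K =>
    recur_step hγ₁ hγ₂ hIndep hUnif y L N hL2 hN6 hρ hρpos hρ1 hρN (t K) (t (K+1)) (htS K)
  have hiter : ∀ K, P (F K) ≤ ENNReal.ofReal (1-ρ/2) ^ K := by
    intro K
    induction K with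
    | zero => simpa using prob_le_one
    | succ K ih =>
      calc P (F (K+1)) ≤ ENNReal.ofReal (1-ρ/2) * P (F K) := hkey K
        _ ≤ ENNReal.ofReal (1-ρ/2) * ENNReal.ofReal (1-ρ/2)^K := mul_le_mul_right ih _
        _ = ENNReal.ofReal (1-ρ/2)^(K+1) := by rw [pow_succ, mul_comm]
  have hsub : ∀ K, {q : ℤ → ℝ | ∀ n : ℕ, 2 ≤ bdCocycleZ γ₁ γ₂ q n y} ⊆ F K := by
    intro K q hq n _
    exact hq n
  have hr1 : ENNReal.ofReal (1-ρ/2) < 1 := by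
    rw [← ENNReal.ofReal_one]
    exact (ENNReal.ofReal_lt_ofReal_iff (by norm_num)).mpr (by linarith)
  have htend := ENNReal.tendsto_pow_atTop_nhds_zero_of_lt_one hr1
  have hfinal : P {q : ℤ → ℝ | ∀ n : ℕ, 2 ≤ bdCocycleZ γ₁ γ₂ q n y} ≤ 0 :=
    ge_of_tendsto' htend (fun K => le_trans (measure_mono (hsub K)) (hiter K))
  exact le_antisymm hfinal zero_le

end recur

/-! ### Shift invariance of the product measure -/

lemma shiftZ_measurable : Measurable shiftZ :=
  measurable_pi_lambda _ fun _ => measurable_pi_apply _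

lemma shiftZ_iter_measurable (n : ℕ) : Measurable (shiftZ^[n]) :=
  shiftZ_measurable.iterate n

lemma shiftZ_iter_apply (n : ℕ) (q : ℤ → ℝ) (i : ℤ) : (shiftZ^[n] q) i = q (i + n) := by
  induction n generalizing q i with
  | zero => simp
  | succ n ih =>
    rw [Function.iterate_succ, Function.comp_apply]
    rw [ih (shiftZ q) i]
    unfold shiftZ
    congr 1
    push_cast
    ring

section shiftinv
variable {P : Measure (ℤ → ℝ)} [IsProbabilityMeasure P]
variable (hIndep : iIndepFun (fun (i : ℤ) (q : ℤ → ℝ) => q i) P)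
variable (hUnif : ∀ i : ℤ, P.map (fun q => q i) = volume.restrict (Set.Icc (0 : ℝ) 1))
include hIndep hUnif

lemma map_restrict (m : ℤ) (s : Finset ℤ) :
    P.map (fun q (i : s) => q ((i:ℤ) + m))
      = Measure.pi (fun _ : s => volume.restrict (Set.Icc (0:ℝ) 1)) := by
  classical
  have hmeas : Measurable (fun (q : ℤ → ℝ) (i : s) => q ((i:ℤ)+m)) :=
    measurable_pi_lambda _ fun _ => measurable_pi_apply _
  refine (Measure.pi_eq ?_).symm
  intro E hE
  rw [Measure.map_apply hmeas (MeasurableSet.univ_pi hE)]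
  set E' : ℤ → Set ℝ := fun j => ⋂ (i : s), ⋂ (_ : (i:ℤ) + m = j), E i with hE'
  have hE'm : ∀ j, MeasurableSet (E' j) := by
    intro j
    exact MeasurableSet.iInter fun i => MeasurableSet.iInter fun _ => hE i
  have hE'coll : ∀ i : s, E' ((i:ℤ) + m) = E i := by
    intro i
    ext x
    simp only [hE', Set.mem_iInter]
    constructor
    · intro h; exact h i rfl
    · intro hx i' hi'
      have : (i' : ℤ) = (i : ℤ) := by omega
      have : i' = i := Subtype.ext this
      rw [this]; exact hx
  set S : Finset ℤ := s.image (fun i => i + m) with hS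
  have hinj : Set.InjOn (fun i : ℤ => i + m) s := fun x _ y _ h => by
    simp only at h; omega
  have hpre : (fun (q : ℤ → ℝ) (i : s) => q ((i:ℤ)+m)) ⁻¹' (Set.univ.pi E)
      = ⋂ j ∈ S, (fun q : ℤ → ℝ => q j) ⁻¹' (E' j) := by
    ext q
    simp only [Set.mem_preimage, Set.mem_univ_pi, Set.mem_iInter, hS, Finset.mem_image, hE']
    constructor
    · rintro h j hj i' hi'
      obtain ⟨i, hi, rfl⟩ := hj
      have hii : (i' : ℤ) = i := by omega
      have hieq : i' = (⟨i, hi⟩ : s) := Subtype.ext (by rw [hii])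
      rw [hieq]
      exact h ⟨i, hi⟩
    · intro h i
      exact h ((i:ℤ)+m) ⟨i, i.2, rfl⟩ i rfl
  rw [hpre, hIndep.measure_inter_preimage_eq_mul (S := S) (sets := E') (fun j _ => hE'm j)]
  rw [hS, Finset.prod_image (fun x hx y hy h => hinj hx hy h)]
  rw [Finset.univ_eq_attach, ← Finset.prod_attach s
    (fun j => P ((fun q : ℤ → ℝ => q (j+m)) ⁻¹' E' (j+m)))]
  refine Finset.prod_congr rfl fun i _ => ?_
  rw [prob_eval hUnif _ (hE'm _), hE'coll i, Measure.restrict_apply (hE i)]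

lemma map_shift : P.map shiftZ = P := by
  classical
  have hP' : IsProbabilityMeasure (P.map shiftZ) :=
    Measure.isProbabilityMeasure_map shiftZ_measurable.aemeasurable
  refine ext_of_generate_finite _ generateFrom_measurableCylinders.symm
    isPiSystem_measurableCylinders ?_ ?_
  · intro C hC
    obtain ⟨s, S, hS, rfl⟩ := (mem_measurableCylinders C).mp hC
    have hmeas1 : Measurable (fun (q : ℤ → ℝ) (i : s) => q ((i:ℤ)+1)) :=
      measurable_pi_lambda _ fun _ => measurable_pi_apply _
    have hmeas0 : Measurable (fun (q : ℤ → ℝ) (i : s) => q (i:ℤ)) :=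
      measurable_pi_lambda _ fun _ => measurable_pi_apply _
    have h0 : (fun (q : ℤ → ℝ) (i : s) => q ((i:ℤ) + 0)) = (fun q (i : s) => q (i:ℤ)) := by
      funext q i; rw [add_zero]
    have e1 := map_restrict hIndep hUnif 1 s
    have e0 := map_restrict hIndep hUnif 0 s
    rw [h0] at e0
    rw [Measure.map_apply shiftZ_measurable (hS.cylinder)]
    have hpre : shiftZ ⁻¹' (cylinder s S) = (fun (q : ℤ → ℝ) (i : s) => q ((i:ℤ)+1)) ⁻¹' S := rfl
    have hcyl : cylinder s S = (fun (q : ℤ → ℝ) (i : s) => q (i:ℤ)) ⁻¹' S := rfl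
    rw [hpre, ← Measure.map_apply hmeas1 hS, e1, ← e0, Measure.map_apply hmeas0 hS, ← hcyl]
  · rw [Measure.map_apply shiftZ_measurable MeasurableSet.univ]
    simp

lemma map_shift_iter (n : ℕ) : P.map (shiftZ^[n]) = P := by
  induction n with
  | zero => simp
  | succ n ih =>
    rw [Function.iterate_succ']
    rw [← Measure.map_map shiftZ_measurable (shiftZ_iter_measurable n)]
    rw [ih, map_shift hIndep hUnif]

lemma prob_shift_pre (n : ℕ) {E : Set (ℤ → ℝ)} (hE : MeasurableSet E) :
    P (shiftZ^[n] ⁻¹' E) = P E := by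
  rw [← Measure.map_apply (shiftZ_iter_measurable n) hE, map_shift_iter hIndep hUnif]

end shiftinv

/-! ### Lemmas about distances on `ℕ` and random sets -/

lemma nat_abs_ge_one {x y : ℕ} (h : x ≠ y) : (1:ℝ) ≤ |(x:ℝ) - (y:ℝ)| := by
  have h1 : (x:ℤ) ≠ (y:ℤ) := by exact_mod_cast h
  have h2 : (1:ℤ) ≤ |(x:ℤ) - (y:ℤ)| := Int.one_le_abs (sub_ne_zero.mpr h1)
  have h3 : ((|(x:ℤ) - (y:ℤ)| : ℤ) : ℝ) = |(x:ℝ) - (y:ℝ)| := by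
    push_cast
    rfl
  rw [← h3]
  exact_mod_cast h2

lemma distToSetNat_eq_zero_iff {x : ℕ} {B : Set ℕ} (hne : B.Nonempty) :
    distToSetNat x B = 0 ↔ x ∈ B := by
  have hbdd : BddBelow ((fun y : ℕ => |(x : ℝ) - (y : ℝ)|) '' B) := by
    refine ⟨0, ?_⟩
    rintro d ⟨y, _, rfl⟩
    exact abs_nonneg _
  constructor
  · intro h
    by_contra hx
    have hlb : (1:ℝ) ≤ distToSetNat x B := by
      refine le_csInf (hne.image _) ?_
      rintro d ⟨y, hy, rfl⟩
      exact nat_abs_ge_one (fun h' => hx (h' ▸ hy))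
    rw [h] at hlb
    linarith
  · intro h
    refine le_antisymm ?_ ?_
    · refine csInf_le hbdd ?_
      exact ⟨x, h, by simp⟩
    · refine le_csInf (hne.image _) ?_
      rintro d ⟨y, _, rfl⟩
      exact abs_nonneg _

lemma mem_of_dist_lt_one {x : ℕ} {B : Set ℕ} (hne : B.Nonempty)
    (h : distToSetNat x B < 1) : x ∈ B := by
  obtain ⟨d, ⟨y, hy, rfl⟩, hd⟩ := exists_lt_of_csInf_lt (hne.image _) h
  have : x = y := by
    by_contra hxy
    have := nat_abs_ge_one hxy
    linarith
  exact this ▸ hy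

lemma mem_of_hausSemidist_lt {B A : Set ℕ} (hBfin : B.Finite) (hAne : A.Nonempty) {x : ℕ}
    (hx : x ∈ B) (h : hausSemidistNat B A < 1) : x ∈ A := by
  have h1 : distToSetNat x A ≤ hausSemidistNat B A :=
    le_csSup (hBfin.image _).bddAbove (Set.mem_image_of_mem _ hx)
  exact mem_of_dist_lt_one hAne (lt_of_le_of_lt h1 h)

lemma pair_coalesce {γ₁ γ₂ : ℝ} (hγ₁ : 0 < γ₁) {q : ℤ → ℝ} (hq : ∀ i : ℕ, q (i:ℤ) < 1)
    {x y n : ℕ} (hxy : x ≤ y) (hpar : x % 2 = y % 2)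
    (hy : bdCocycleZ γ₁ γ₂ q n y ≤ 1) :
    bdCocycleZ γ₁ γ₂ q n x = bdCocycleZ γ₁ γ₂ q n y := by
  have h1 := cocycle_mono (γ₂ := γ₂) hγ₁ (fun i _ => hq i) hpar hxy (n := n)
  have h2 := cocycle_parity (γ₂ := γ₂) hγ₁ (fun i (_ : i < n) => hq i) x
  have h3 := cocycle_parity (γ₂ := γ₂) hγ₁ (fun i (_ : i < n) => hq i) y
  omega

lemma measEq {γ₁ γ₂ : ℝ} (n x y : ℕ) :
    MeasurableSet {q : ℤ → ℝ | bdCocycleZ γ₁ γ₂ q n x = bdCocycleZ γ₁ γ₂ q n y} := by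
  have : {q : ℤ → ℝ | bdCocycleZ γ₁ γ₂ q n x = bdCocycleZ γ₁ γ₂ q n y}
      = ⋃ z : ℕ, ((fun q => bdCocycleZ γ₁ γ₂ q n x) ⁻¹' {z}
          ∩ (fun q => bdCocycleZ γ₁ γ₂ q n y) ⁻¹' {z}) := by
    ext q
    simp only [Set.mem_setOf_eq, Set.mem_iUnion, Set.mem_inter_iff, Set.mem_preimage,
      Set.mem_singleton_iff]
    constructor
    · intro h; exact ⟨_, rfl, h.symm⟩
    · rintro ⟨z, h1, h2⟩; rw [h1, h2]
  rw [this]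
  exact MeasurableSet.iUnion fun z => MeasurableSet.inter
    ((measX n x) (measurableSet_singleton z)) ((measX n y) (measurableSet_singleton z))

end St13

open St13

/-- Any weak attractor of the two-sided birth-death chain RDS (an invariant random set with
nonempty finite fibers attracting every finite deterministic set in probability) has exactly
two points on almost every fiber; moreover it contains exactly one even and exactly one odd
natural number almost surely. -/
theorem stmt13 (γ₁ γ₂ : ℝ) (hγ₁ : 0 < γ₁) (hγ₂ : 0 < γ₂)
    (P : Measure (ℤ → ℝ)) [IsProbabilityMeasure P]
    (hIndep : iIndepFun (fun (i : ℤ) (q : ℤ → ℝ) => q i) P)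
    (hUnif : ∀ i : ℤ, P.map (fun q => q i) = volume.restrict (Set.Icc (0 : ℝ) 1))
    (A : (ℤ → ℝ) → Set ℕ)
    (hAne : ∀ q, (A q).Nonempty) (hAfin : ∀ q, (A q).Finite)
    (hAmeas : ∀ x : ℕ, Measurable fun q => distToSetNat x (A q))
    (hAinv : ∀ n : ℕ, ∀ᵐ q ∂P, (fun x => bdCocycleZ γ₁ γ₂ q n x) '' A q = A (shiftZ^[n] q))
    (hAattr : ∀ B : Set ℕ, B.Finite → ∀ ε : ℝ, 0 < ε →
      Tendsto (fun n : ℕ =>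
          P {q | ε ≤ hausSemidistNat ((fun x => bdCocycleZ γ₁ γ₂ q n x) '' B)
            (A (shiftZ^[n] q))}) atTop (nhds 0)) :
    ∀ᵐ q ∂P, (A q).ncard = 2 ∧
      (∃! a : ℕ, a ∈ A q ∧ Even a) ∧ (∃! a : ℕ, a ∈ A q ∧ Odd a) := by
  classical
  have hmem : ∀ x : ℕ, MeasurableSet {q | x ∈ A q} := by
    intro x
    have hiff : {q | x ∈ A q} = (fun q => distToSetNat x (A q)) ⁻¹' {0} := by
      ext q
      simp only [Set.mem_setOf_eq, Set.mem_preimage, Set.mem_singleton_iff]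
      exact ⟨fun h => (distToSetNat_eq_zero_iff (hAne q)).mpr h,
        fun h => (distToSetNat_eq_zero_iff (hAne q)).mp h⟩
    rw [hiff]
    exact (hAmeas x) (measurableSet_singleton 0)
  set Good : Set (ℤ → ℝ) := {q | ∃ a b : ℕ, a % 2 = 0 ∧ b % 2 = 1 ∧ A q = {a, b}} with hGoodDef
  have hpairm : ∀ a b : ℕ, MeasurableSet {q | A q = {a, b}} := by
    intro a b
    have hset : {q | A q = {a,b}} = {q | a ∈ A q} ∩ {q | b ∈ A q}
        ∩ ⋂ c : ℕ, {q | c ∈ A q → c = a ∨ c = b} := by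
      ext q
      simp only [Set.mem_setOf_eq, Set.mem_inter_iff, Set.mem_iInter]
      constructor
      · intro h
        refine ⟨⟨by rw [h]; exact Set.mem_insert _ _,
          by rw [h]; exact Set.mem_insert_of_mem _ rfl⟩, ?_⟩
        intro c hc
        rw [h] at hc
        rcases hc with h' | h'
        · exact Or.inl h'
        · exact Or.inr h'
      · rintro ⟨⟨ha, hb⟩, h⟩
        ext c
        constructor
        · intro hc
          rcases h c hc with rfl | rfl
          · exact Set.mem_insert _ _
          · exact Set.mem_insert_of_mem _ rfl
        · intro hc
          rcases hc with rfl | hc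
          · exact ha
          · rw [Set.mem_singleton_iff] at hc
            subst hc
            exact hb
    rw [hset]
    refine MeasurableSet.inter (MeasurableSet.inter (hmem a) (hmem b))
      (MeasurableSet.iInter fun c => ?_)
    by_cases hc : c = a ∨ c = b
    · have : {q | c ∈ A q → c = a ∨ c = b} = Set.univ := by
        ext q; simp only [Set.mem_setOf_eq, Set.mem_univ, iff_true]; exact fun _ => hc
      rw [this]; exact MeasurableSet.univ
    · have : {q | c ∈ A q → c = a ∨ c = b} = {q | c ∈ A q}ᶜ := by
        ext q
        simp only [Set.mem_setOf_eq, Set.mem_compl_iff]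
        constructor
        · intro h hm; exact hc (h hm)
        · intro h hm; exact absurd hm h
      rw [this]; exact (hmem c).compl
  have hGoodm : MeasurableSet Good := by
    have : Good = ⋃ a : ℕ, ⋃ b : ℕ, ⋃ (_ : a % 2 = 0), ⋃ (_ : b % 2 = 1), {q | A q = {a, b}} := by
      ext q
      simp only [hGoodDef, Set.mem_setOf_eq, Set.mem_iUnion]
      constructor
      · rintro ⟨a, b, h1, h2, h3⟩; exact ⟨a, b, h1, h2, h3⟩
      · rintro ⟨a, b, h1, h2, h3⟩; exact ⟨a, b, h1, h2, h3⟩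
    rw [this]
    exact .iUnion fun a => .iUnion fun b => .iUnion fun _ => .iUnion fun _ => hpairm a b
  set Par : Set (ℤ → ℝ) := {q | ∀ i : ℕ, q (i:ℤ) < 1} with hParDef
  have hParc : P Parᶜ = 0 := by
    have hps : Parᶜ = {q : ℤ → ℝ | ¬ ∀ i : ℕ, q (i:ℤ) < 1} := rfl
    rw [hps]
    exact prob_not_lt_one hUnif
  -- coalescence events
  set C : ℕ → ℕ → Set (ℤ → ℝ) := fun M n => {q | ∀ x ≤ M+1, ∀ y ≤ M+1, x % 2 = y % 2 →
      bdCocycleZ γ₁ γ₂ q n x = bdCocycleZ γ₁ γ₂ q n y} with hCdef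
  have hCm : ∀ M n, MeasurableSet (C M n) := by
    intro M n
    have hset : C M n = ⋂ (x : ℕ), ⋂ (_ : x ≤ M+1), ⋂ (y : ℕ), ⋂ (_ : y ≤ M+1),
        ⋂ (_ : x % 2 = y % 2),
        {q | bdCocycleZ γ₁ γ₂ q n x = bdCocycleZ γ₁ γ₂ q n y} := by
      ext q
      simp only [hCdef, Set.mem_setOf_eq, Set.mem_iInter]
    rw [hset]
    exact .iInter fun x => .iInter fun _ => .iInter fun y => .iInter fun _ =>
      .iInter fun _ => measEq n x y
  have hCmono : ∀ M, Monotone (C M) := by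
    intro M n1 n2 h q hq x hx y hy hpar
    exact coalesce_persist (hq x hx y hy hpar) h
  have hCfull : ∀ M, P (⋃ n, C M n) = 1 := by
    intro M
    have hcompl : (⋃ n, C M n)ᶜ ⊆ Parᶜ ∪ ⋃ y : ℕ, ⋃ (_ : y ≤ M+1),
        {q | ∀ n : ℕ, 2 ≤ bdCocycleZ γ₁ γ₂ q n y} := by
      intro q hq
      by_contra hcon
      simp only [Set.mem_union, Set.mem_iUnion, not_or, not_exists] at hcon
      obtain ⟨hPar', hrec⟩ := hcon
      have hqPar : ∀ i : ℕ, q (i:ℤ) < 1 := Set.notMem_compl_iff.mp hPar'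
      have hex : ∀ y : ℕ, ∃ n, (y ≤ M+1 → bdCocycleZ γ₁ γ₂ q n y ≤ 1) := by
        intro y
        by_cases hy : y ≤ M+1
        · have h2 := hrec y hy
          simp only [Set.mem_setOf_eq, not_forall, not_le] at h2
          obtain ⟨n, hn⟩ := h2
          exact ⟨n, fun _ => by omega⟩
        · exact ⟨0, fun h => absurd h hy⟩
      choose g hg using hex
      set nstar := (Finset.range (M+2)).sup g with hnstar
      refine hq (Set.mem_iUnion.mpr ⟨nstar, ?_⟩)
      intro x hx y hy hpar
      rcases le_total x y with hxy | hxy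
      · have h1 : bdCocycleZ γ₁ γ₂ q (g y) y ≤ 1 := hg y hy
        have h2 := pair_coalesce hγ₁ hqPar hxy hpar h1
        exact coalesce_persist h2 (Finset.le_sup (Finset.mem_range.mpr (by omega)))
      · have h1 : bdCocycleZ γ₁ γ₂ q (g x) x ≤ 1 := hg x hx
        have h2 := pair_coalesce hγ₁ hqPar hxy hpar.symm h1
        exact (coalesce_persist h2 (Finset.le_sup (Finset.mem_range.mpr (by omega)))).symm
    have h0 : P ((⋃ n, C M n)ᶜ) = 0 := by
      refine measure_mono_null hcompl (measure_union_null hParc ?_)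
      exact measure_iUnion_null fun y => measure_iUnion_null fun _ =>
        recur hγ₁ hγ₂ hIndep hUnif y
    have hms := measure_compl (MeasurableSet.iUnion (fun n => hCm M n)) (measure_ne_top P _)
    rw [h0, measure_univ] at hms
    have h1le : (1:ENNReal) ≤ P (⋃ n, C M n) := tsub_eq_zero_iff_le.mp hms.symm
    exact le_antisymm prob_le_one h1le
  have hClim : ∀ M, Tendsto (fun n => P ((C M n)ᶜ)) atTop (nhds 0) := by
    intro M
    have h1 : Tendsto (fun n => P (C M n)) atTop (nhds 1) := by
      have := tendsto_measure_iUnion_atTop (μ := P) (hCmono M)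
      rwa [hCfull M] at this
    have heq : (fun n => P ((C M n)ᶜ)) = fun n => 1 - P (C M n) :=
      funext fun n => by rw [measure_compl (hCm M n) (measure_ne_top P _), measure_univ]
    rw [heq]
    have h2 := ENNReal.Tendsto.sub
      (tendsto_const_nhds : Tendsto (fun _ : ℕ => (1:ENNReal)) atTop (nhds 1)) h1
      (Or.inl ENNReal.one_ne_top)
    simpa using h2
  -- boundedness events
  set S4 : ℕ → Set (ℤ → ℝ) := fun M => {q | ∀ x : ℕ, x ∈ A q → x ≤ M+1} with hS4def
  have hS4m : ∀ M, MeasurableSet (S4 M) := by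
    intro M
    have hset : S4 M = ⋂ (x : ℕ), ⋂ (_ : ¬ (x ≤ M+1)), {q | x ∈ A q}ᶜ := by
      ext q
      simp only [hS4def, Set.mem_setOf_eq, Set.mem_iInter, Set.mem_compl_iff]
      constructor
      · intro h x hx hmem'; exact hx (h x hmem')
      · intro h x hmem'
        by_contra hx
        exact h x hx hmem'
    rw [hset]
    exact .iInter fun x => .iInter fun _ => (hmem x).compl
  have hS4mono : Monotone S4 := fun M1 M2 h q hq x hx => le_trans (hq x hx) (by omega)
  have hS4full : P (⋃ M, S4 M) = 1 := by
    have hset : (⋃ M, S4 M) = Set.univ := by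
      ext q
      simp only [Set.mem_iUnion, Set.mem_univ, iff_true]
      obtain ⟨M, hM⟩ := (hAfin q).bddAbove
      exact ⟨M, fun x hx => le_trans (hM hx) (by omega)⟩
    rw [hset, measure_univ]
  -- the key inequality
  have hmain : ∀ M n, P Goodᶜ ≤
      P {q | (1:ℝ)/2 ≤ hausSemidistNat ((fun x => bdCocycleZ γ₁ γ₂ q n x) '' (Set.Iic (M+1)))
        (A (shiftZ^[n] q))}
      + P ((C M n)ᶜ) + P ((S4 M)ᶜ) := by
    intro M n
    set E1 := {q | (1:ℝ)/2 ≤ hausSemidistNat ((fun x => bdCocycleZ γ₁ γ₂ q n x)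
      '' (Set.Iic (M+1))) (A (shiftZ^[n] q))} with hE1def
    set E3 := {q | ¬ ((fun x => bdCocycleZ γ₁ γ₂ q n x) '' A q = A (shiftZ^[n] q))} with hE3def
    have hE3 : P E3 = 0 := by
      have := hAinv n
      rw [ae_iff] at this
      exact this
    have hincl : (shiftZ^[n]) ⁻¹' Goodᶜ ⊆ E1 ∪ (C M n)ᶜ ∪ (S4 M)ᶜ ∪ Parᶜ ∪ E3 := by
      intro q hq
      by_contra hcon
      simp only [Set.mem_union, not_or] at hcon
      obtain ⟨⟨⟨⟨h1, h2⟩, h3⟩, h4⟩, h5⟩ := hcon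
      have hq1 : hausSemidistNat ((fun x => bdCocycleZ γ₁ γ₂ q n x) '' (Set.Iic (M+1)))
          (A (shiftZ^[n] q)) < 1/2 := by
        have := h1
        rw [hE1def] at this
        simp only [Set.mem_setOf_eq, not_le] at this
        exact this
      have hq2 : q ∈ C M n := Set.notMem_compl_iff.mp h2
      have hq3 : q ∈ S4 M := Set.notMem_compl_iff.mp h3
      have hqPar : ∀ i : ℕ, q (i:ℤ) < 1 := Set.notMem_compl_iff.mp h4
      have hq5 : (fun x => bdCocycleZ γ₁ γ₂ q n x) '' A q = A (shiftZ^[n] q) := by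
        have := h5
        rw [hE3def] at this
        simp only [Set.mem_setOf_eq, not_not] at this
        exact this
      set v0 := bdCocycleZ γ₁ γ₂ q n 0 with hv0
      set v1 := bdCocycleZ γ₁ γ₂ q n 1 with hv1
      have himg : (fun x => bdCocycleZ γ₁ γ₂ q n x) '' (Set.Iic (M+1)) = {v0, v1} := by
        ext v
        simp only [Set.mem_image, Set.mem_Iic, Set.mem_insert_iff, Set.mem_singleton_iff]
        constructor
        · rintro ⟨x, hx, rfl⟩
          rcases Nat.mod_two_eq_zero_or_one x with hpar | hpar
          · left
            exact hq2 x hx 0 (by omega) (by omega)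
          · right
            exact hq2 x hx 1 (by omega) (by omega)
        · rintro (rfl | rfl)
          · exact ⟨0, by omega, rfl⟩
          · exact ⟨1, by omega, rfl⟩
      have hAeq : A (shiftZ^[n] q) = {v0, v1} := by
        refine Set.Subset.antisymm ?_ ?_
        · rw [← hq5, ← himg]
          exact Set.image_mono (fun x hx => hq3 x hx)
        · rw [← himg]
          intro v hv
          exact mem_of_hausSemidist_lt ((Set.finite_Iic (M+1)).image _) (hAne _) hv
            (lt_trans hq1 (by norm_num))
      have hp0 : v0 % 2 = n % 2 := by
        have := cocycle_parity (γ₂ := γ₂) hγ₁ (fun i (_ : i < n) => hqPar i) 0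
        simpa using this
      have hp1 : v1 % 2 = (1+n) % 2 := by
        have := cocycle_parity (γ₂ := γ₂) hγ₁ (fun i (_ : i < n) => hqPar i) 1
        simpa using this
      have hGoodmem : shiftZ^[n] q ∈ Good := by
        rcases Nat.mod_two_eq_zero_or_one n with hn | hn
        · exact ⟨v0, v1, by omega, by omega, hAeq⟩
        · refine ⟨v1, v0, by omega, by omega, ?_⟩
          rw [hAeq, Set.pair_comm]
      exact hq hGoodmem
    rw [← prob_shift_pre hIndep hUnif n hGoodm.compl]
    calc P ((shiftZ^[n]) ⁻¹' Goodᶜ)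
        ≤ P (E1 ∪ (C M n)ᶜ ∪ (S4 M)ᶜ ∪ Parᶜ ∪ E3) := measure_mono hincl
      _ ≤ P (E1 ∪ (C M n)ᶜ ∪ (S4 M)ᶜ ∪ Parᶜ) + P E3 := measure_union_le _ _
      _ ≤ (P (E1 ∪ (C M n)ᶜ ∪ (S4 M)ᶜ) + P Parᶜ) + P E3 := by
          gcongr
          exact measure_union_le _ _
      _ = P (E1 ∪ (C M n)ᶜ ∪ (S4 M)ᶜ) := by rw [hParc, hE3, add_zero, add_zero]
      _ ≤ P (E1 ∪ (C M n)ᶜ) + P ((S4 M)ᶜ) := measure_union_le _ _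
      _ ≤ P E1 + P ((C M n)ᶜ) + P ((S4 M)ᶜ) := by
          gcongr
          exact measure_union_le _ _
  -- limits in n, for each M
  have hMbound : ∀ M, P Goodᶜ ≤ P ((S4 M)ᶜ) := by
    intro M
    have hattr := hAattr (Set.Iic (M+1)) (Set.finite_Iic _) (1/2) (by norm_num)
    have hsum := (hattr.add (hClim M)).add
      (tendsto_const_nhds : Tendsto (fun _ : ℕ => P ((S4 M)ᶜ)) atTop (nhds (P ((S4 M)ᶜ))))
    have hge := ge_of_tendsto' hsum (fun n => hmain M n)
    simpa using hge
  -- limit in M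
  have hGood0 : P Goodᶜ = 0 := by
    have h1 : Tendsto (fun M => P (S4 M)) atTop (nhds 1) := by
      have := tendsto_measure_iUnion_atTop (μ := P) hS4mono
      rwa [hS4full] at this
    have heq : (fun M => P ((S4 M)ᶜ)) = fun M => 1 - P (S4 M) :=
      funext fun M => by rw [measure_compl (hS4m M) (measure_ne_top P _), measure_univ]
    have hS4clim : Tendsto (fun M => P ((S4 M)ᶜ)) atTop (nhds 0) := by
      rw [heq]
      have h2 := ENNReal.Tendsto.sub
        (tendsto_const_nhds : Tendsto (fun _ : ℕ => (1:ENNReal)) atTop (nhds 1)) h1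
        (Or.inl ENNReal.one_ne_top)
      simpa using h2
    have := ge_of_tendsto' hS4clim hMbound
    exact le_antisymm this zero_le
  -- conclude
  rw [ae_iff]
  refine measure_mono_null ?_ hGood0
  intro q hq
  simp only [Set.mem_setOf_eq] at hq
  simp only [Set.mem_compl_iff, hGoodDef, Set.mem_setOf_eq]
  rintro ⟨a, b, ha, hb, heq⟩
  apply hq
  have hab : a ≠ b := by omega
  refine ⟨?_, ?_, ?_⟩
  · rw [heq]
    exact Set.ncard_pair hab
  · refine ⟨a, ⟨by rw [heq]; exact Set.mem_insert _ _, Nat.even_iff.mpr ha⟩, ?_⟩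
    rintro y ⟨hy, hyev⟩
    rw [heq] at hy
    rcases hy with rfl | hy
    · rfl
    · rw [Set.mem_singleton_iff] at hy
      subst hy
      rw [Nat.even_iff] at hyev
      omega
  · refine ⟨b, ⟨by rw [heq]; exact Set.mem_insert_of_mem _ rfl, Nat.odd_iff.mpr hb⟩, ?_⟩
    rintro y ⟨hy, hyodd⟩
    rw [heq] at hy
    rcases hy with rfl | hy
    · rw [Nat.odd_iff] at hyodd
      omega
    · rw [Set.mem_singleton_iff] at hy
      subst hy
      rfl
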